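/- arXiv:1409.7029 — 4 statements merged into one kernel-verified Lean document; each statement's English description precedes it below -/
import Mathlib

section
/- Let g, a, and d be positive integers and let H be a subgroup of (ℤ/dℤ)ˣ of index at most 2g. Then |(1/|H|) Σ_{b∈H} e^{2πiab/d}| ≤ 2g·√(ad)/φ(d), where φ is Euler's totient function. -/
open Complex Finset

private lemma ker_card_le (a d : ℕ) (ha : 0 < a) [NeZero d] :
    (Finset.univ.filter (fun y : ZMod d => (a : ZMod d) * y = 0)).card ≤ a := by
  have h := Finset.card_le_card_of_injOn (f := fun y : ZMod d => a * y.val / d)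
    (s := Finset.univ.filter (fun y : ZMod d => (a : ZMod d) * y = 0))
    (t := Finset.range a) ?_ ?_
  · simpa using h
  · intro y hy
    simp only [mem_coe, mem_filter] at hy
    have hdvd : d ∣ a * y.val := by
      have : ((a * y.val : ℕ) : ZMod d) = 0 := by
        push_cast [ZMod.natCast_val, ZMod.cast_id]
        simpa using hy
      exact (ZMod.natCast_eq_zero_iff _ _).mp this
    have hlt : a * y.val < a * d := (Nat.mul_lt_mul_left ha).mpr (ZMod.val_lt y)
    simp only [mem_coe, mem_range]
    exact Nat.lt_of_mul_lt_mul_left (a := d)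
      (by rw [Nat.mul_div_cancel' hdvd, Nat.mul_comm d a]; exact hlt)
  · intro y hy z hz hyz
    simp only [mem_coe, mem_filter] at hy hz
    have hy' : d ∣ a * y.val := by
      have : ((a * y.val : ℕ) : ZMod d) = 0 := by
        push_cast [ZMod.natCast_val, ZMod.cast_id]; simpa using hy.2
      exact (ZMod.natCast_eq_zero_iff _ _).mp this
    have hz' : d ∣ a * z.val := by
      have : ((a * z.val : ℕ) : ZMod d) = 0 := by
        push_cast [ZMod.natCast_val, ZMod.cast_id]; simpa using hz.2
      exact (ZMod.natCast_eq_zero_iff _ _).mp this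
    have h1 : a * y.val = a * z.val := by
      have := congrArg (· * d) hyz
      simpa [Nat.div_mul_cancel hy', Nat.div_mul_cancel hz'] using this
    exact ZMod.val_injective d (Nat.eq_of_mul_eq_mul_left ha h1)

private lemma conj_std (d : ℕ) [NeZero d] (x : ZMod d) :
    (starRingEnd ℂ) (ZMod.stdAddChar x) = ZMod.stdAddChar (-x) := by
  rw [AddChar.map_neg_eq_inv, Complex.inv_eq_conj]
  rw [ZMod.stdAddChar_apply]
  exact Circle.norm_coe _

/-- If `H ≤ (ℤ/dℤ)ˣ` has index at most `2g`, then the normalized exponential sum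
`|(1/|H|) Σ_{b∈H} e^{2πiab/d}|` is at most `2g·√(ad)/φ(d)`. -/
theorem stmt3 (g a d : ℕ) (hg : 0 < g) (ha : 0 < a) (hd : 0 < d)
    (H : Subgroup (ZMod d)ˣ) (hH : H.index ≤ 2 * g) :
    ‖(1 / (Nat.card H : ℂ)) *
        ∑ᶠ b : H, Complex.exp (2 * Real.pi * I * a * ((b : (ZMod d)ˣ) : ZMod d).val / d)‖
      ≤ 2 * g * Real.sqrt (a * d) / Nat.totient d := by
  haveI : NeZero d := ⟨hd.ne'⟩
  haveI : Fintype H := Fintype.ofFinite H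
  let ψ : AddChar (ZMod d) ℂ := ZMod.stdAddChar
  let c : H → ZMod d := fun b => ((b : (ZMod d)ˣ) : ZMod d)
  have hcinj : Function.Injective c := fun x y h => Subtype.ext (Units.ext h)
  have hcmul : ∀ x y : H, c (x * y) = c x * c y := fun x y => rfl
  -- the exponential sums
  let T : ZMod d → ℂ := fun u => ∑ b : H, ψ (u * c b)
  -- Step 0 : rewrite the finsum
  have hfin : (∑ᶠ b : H, Complex.exp (2 * Real.pi * I * a * ((b : (ZMod d)ˣ) : ZMod d).val / d))
      = T (a : ZMod d) := by
    rw [finsum_eq_sum_of_fintype]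
    refine Finset.sum_congr rfl fun b _ => ?_
    have h1 : ((a : ZMod d) * c b) = (((a * (c b).val : ℕ) : ZMod d)) := by
      push_cast [ZMod.natCast_val, ZMod.cast_id]
      ring
    show Complex.exp _ = ψ _
    rw [h1, show ψ = ZMod.stdAddChar from rfl]
    conv_rhs => rw [← Int.cast_natCast (R := ZMod d) (a * (c b).val), ZMod.stdAddChar_coe]
    dsimp only [c]
    push_cast
    ring_nf
  -- Step 1 : second moment identity
  have key1 : ∑ u : ZMod d, Complex.normSq (T u) = d * Fintype.card H := by
    have hC : ∑ u : ZMod d, (Complex.normSq (T u) : ℂ) = (d : ℂ) * Fintype.card H := by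
      have e1 : ∀ u : ZMod d, (Complex.normSq (T u) : ℂ)
          = ∑ b : H, ∑ b' : H, ψ (u * (c b - c b')) := by
        intro u
        rw [← Complex.mul_conj]
        show (∑ b : H, ψ (u * c b)) * (starRingEnd ℂ) (∑ b' : H, ψ (u * c b')) = _
        rw [map_sum, Finset.sum_mul_sum]
        refine Finset.sum_congr rfl fun b _ => Finset.sum_congr rfl fun b' _ => ?_
        rw [conj_std, ← AddChar.map_add_eq_mul]
        congr 1
        ring
      rw [Finset.sum_congr rfl fun u _ => e1 u]
      have e3 : ∀ b b' : H, ∑ u : ZMod d, ψ (u * (c b - c b'))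
          = if b' = b then (d : ℂ) else 0 := by
        intro b b'
        rw [AddChar.sum_mulShift _ (ZMod.isPrimitive_stdAddChar d)]
        rw [apply_ite (Nat.cast : ℕ → ℂ), Nat.cast_zero, ZMod.card]
        have hPQ : (c b - c b' = 0) = (b' = b) := by
          simp only [eq_iff_iff, sub_eq_zero]
          exact ⟨fun h => hcinj h.symm, fun h => by rw [h]⟩
        simp only [hPQ]
      calc ∑ u : ZMod d, ∑ b : H, ∑ b' : H, ψ (u * (c b - c b'))
          = ∑ b : H, ∑ b' : H, ∑ u : ZMod d, ψ (u * (c b - c b')) := by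
            rw [Finset.sum_comm]
            exact Finset.sum_congr rfl fun b _ => Finset.sum_comm
        _ = ∑ _b : H, (d : ℂ) := Finset.sum_congr rfl fun b _ => by
            rw [Finset.sum_congr rfl fun b' _ => e3 b b']
            simp
        _ = (d : ℂ) * Fintype.card H := by
            rw [Finset.sum_const, Finset.card_univ]; ring
    exact_mod_cast hC
  -- T is constant on the image of h ↦ a * c h
  have key2 : ∀ h : H, T ((a : ZMod d) * c h) = T (a : ZMod d) := by
    intro h
    show ∑ b : H, ψ ((a : ZMod d) * c h * c b) = ∑ b : H, ψ ((a : ZMod d) * c b)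
    exact Fintype.sum_bijective (fun b : H => h * b) (Group.mulLeft_bijective h)
      _ _ (fun x => by rw [hcmul, mul_assoc])
  set Im : Finset (ZMod d) := Finset.image (fun h : H => (a : ZMod d) * c h) Finset.univ with hIm
  have key3 : (Im.card : ℝ) * Complex.normSq (T (a : ZMod d)) ≤ d * Fintype.card H := by
    rw [← key1]
    have e4 : (Im.card : ℝ) * Complex.normSq (T (a : ZMod d))
        = ∑ u ∈ Im, Complex.normSq (T u) := by
      rw [Finset.sum_congr rfl (fun u hu => ?_), Finset.sum_const, nsmul_eq_mul]
      obtain ⟨h, _, rfl⟩ := Finset.mem_image.mp hu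
      rw [key2 h]
    rw [e4]
    exact Finset.sum_le_sum_of_subset_of_nonneg (Finset.subset_univ Im)
      (fun u _ _ => Complex.normSq_nonneg _)
  have key4 : Fintype.card H ≤ a * Im.card := by
    have h5 := Finset.card_le_mul_card_image (f := fun h : H => (a : ZMod d) * c h)
      Finset.univ a ?_
    · simpa using h5
    · intro u hu
      obtain ⟨h₀, _, hh₀⟩ := Finset.mem_image.mp hu
      refine le_trans (Finset.card_le_card_of_injOn (f := fun h : H => c (h * h₀⁻¹) - 1)
        (t := Finset.univ.filter (fun y : ZMod d => (a : ZMod d) * y = 0)) ?_ ?_)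
        (ker_card_le a d ha)
      · intro h hh
        simp only [Finset.mem_coe, Finset.mem_filter, Finset.mem_univ, true_and] at hh ⊢
        rw [hcmul]
        have hx : c h₀ * c h₀⁻¹ = 1 := by rw [← hcmul, mul_inv_cancel]; rfl
        have h1 : (a : ZMod d) * c h = (a : ZMod d) * c h₀ := by rw [hh, ← hh₀]
        linear_combination c h₀⁻¹ * h1 + (a : ZMod d) * hx
      · intro h1 hh1 h2 hh2 heq
        have h6 : c (h1 * h₀⁻¹) = c (h2 * h₀⁻¹) := by
          have := sub_left_inj.mp heq
          exact this
        exact mul_right_cancel (hcinj h6)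
  have hIm_pos : 0 < Im.card := Finset.card_pos.mpr
    ⟨(a : ZMod d) * c 1, Finset.mem_image.mpr ⟨1, Finset.mem_univ _, rfl⟩⟩
  have hns : Complex.normSq (T (a : ZMod d)) ≤ (a : ℝ) * d := by
    have h5 : (Im.card : ℝ) * Complex.normSq (T (a : ZMod d)) ≤ (Im.card : ℝ) * ((a : ℝ) * d) := by
      refine le_trans key3 ?_
      have h6 : (Fintype.card H : ℝ) ≤ (a : ℝ) * Im.card := by exact_mod_cast key4
      nlinarith [(Nat.cast_pos (α := ℝ)).mpr hd]
    exact (mul_le_mul_iff_right₀ (by exact_mod_cast hIm_pos : (0:ℝ) < Im.card)).mp h5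
  have habs : ‖T (a : ZMod d)‖ ≤ Real.sqrt ((a : ℝ) * d) := by
    rw [Complex.norm_def]
    exact Real.sqrt_le_sqrt hns
  have hcard : Nat.card H = Fintype.card H := Nat.card_eq_fintype_card
  have hHpos : 0 < Fintype.card H := Fintype.card_pos
  have htot : Nat.totient d = Nat.card H * H.index := by
    rw [Subgroup.card_mul_index, Nat.card_eq_fintype_card, ZMod.card_units_eq_totient]
  have htotpos : 0 < Nat.totient d := Nat.totient_pos.mpr hd
  have hHR : (0:ℝ) < (Nat.card H : ℝ) := by
    rw [hcard]; exact_mod_cast hHpos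
  rw [hfin, norm_mul]
  have h1abs : ‖1 / (Nat.card H : ℂ)‖ = 1 / (Nat.card H : ℝ) := by
    rw [norm_div, norm_one, Complex.norm_natCast]
  rw [h1abs, div_mul_eq_mul_div, one_mul,
    div_le_div_iff₀ hHR (by exact_mod_cast htotpos)]
  have h2 : (Nat.totient d : ℝ) ≤ 2 * g * (Nat.card H : ℝ) := by
    rw [htot]
    push_cast
    have : (H.index : ℝ) ≤ 2 * g := by exact_mod_cast hH
    nlinarith
  calc ‖T (a : ZMod d)‖ * (Nat.totient d : ℝ)
      ≤ Real.sqrt ((a : ℝ) * d) * (2 * g * (Nat.card H : ℝ)) :=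
        mul_le_mul habs h2 (by positivity) (Real.sqrt_nonneg _)
    _ = 2 * g * Real.sqrt ((a : ℝ) * d) * (Nat.card H : ℝ) := by ring
end

section
/- Let d be a positive integer, let χ be a Dirichlet character modulo d, and let a be a positive integer. Then |Σ_{b∈(ℤ/dℤ)ˣ} χ(b) e^{2πiab/d}| ≤ √(ad). -/
open Complex Finset

noncomputable def Sgauss (d : ℕ) [NeZero d] (χ : (ZMod d)ˣ →* ℂˣ) (c : ZMod d) : ℂ :=
  ∑ b : (ZMod d)ˣ, (χ b : ℂ) * ZMod.stdAddChar (c * (b : ZMod d))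

lemma norm_chi_eq_one {d : ℕ} [NeZero d] (χ : (ZMod d)ˣ →* ℂˣ) (b : (ZMod d)ˣ) :
    ‖((χ b : ℂˣ) : ℂ)‖ = 1 := by
  apply Complex.norm_eq_one_of_pow_eq_one (n := Fintype.card (ZMod d)ˣ)
  · rw [← Units.val_pow_eq_pow_val, ← map_pow, pow_card_eq_one, map_one, Units.val_one]
  · exact Fintype.card_ne_zero

lemma conj_stdAddChar {d : ℕ} [NeZero d] (x : ZMod d) :
    (starRingEnd ℂ) (ZMod.stdAddChar x) = ZMod.stdAddChar (-x) := by
  rw [ZMod.stdAddChar_apply, ZMod.stdAddChar_apply, AddChar.map_neg_eq_inv,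
    Circle.coe_inv_eq_conj]

lemma parseval_gauss {d : ℕ} [NeZero d] (χ : (ZMod d)ˣ →* ℂˣ) :
    ∑ c : ZMod d, ‖Sgauss d χ c‖ ^ 2 = (d : ℝ) * Fintype.card (ZMod d)ˣ := by
  have key : ∑ c : ZMod d, Sgauss d χ c * (starRingEnd ℂ) (Sgauss d χ c)
      = (d : ℂ) * Fintype.card (ZMod d)ˣ := by
    have h1 : ∀ c : ZMod d, Sgauss d χ c * (starRingEnd ℂ) (Sgauss d χ c)
        = ∑ b : (ZMod d)ˣ, ∑ b' : (ZMod d)ˣ,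
          ((χ b : ℂ) * (starRingEnd ℂ) (χ b' : ℂ)) *
            ZMod.stdAddChar (c * ((b : ZMod d) - (b' : ZMod d))) := by
      intro c
      rw [Sgauss, map_sum, Finset.sum_mul_sum]
      refine Finset.sum_congr rfl fun b _ => Finset.sum_congr rfl fun b' _ => ?_
      rw [map_mul (starRingEnd ℂ), conj_stdAddChar]
      rw [show c * ((b : ZMod d) - (b' : ZMod d)) = c * (b : ZMod d) + -(c * (b' : ZMod d)) by
        ring]
      rw [AddChar.map_add_eq_mul]
      ring
    simp_rw [h1]
    rw [Finset.sum_comm]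
    have h2 : ∀ b : (ZMod d)ˣ, ∑ c : ZMod d, ∑ b' : (ZMod d)ˣ,
        ((χ b : ℂ) * (starRingEnd ℂ) (χ b' : ℂ)) *
          ZMod.stdAddChar (c * ((b : ZMod d) - (b' : ZMod d))) = (d : ℂ) := by
      intro b
      rw [Finset.sum_comm]
      have h3 : ∀ b' : (ZMod d)ˣ,
          ∑ c : ZMod d, ((χ b : ℂ) * (starRingEnd ℂ) (χ b' : ℂ)) *
            ZMod.stdAddChar (c * ((b : ZMod d) - (b' : ZMod d)))
          = if b' = b then (d : ℂ) else 0 := by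
        intro b'
        rw [← Finset.mul_sum,
          AddChar.sum_mulShift _ (ZMod.isPrimitive_stdAddChar d)]
        by_cases h : b' = b
        · subst h
          rw [sub_self, if_pos rfl, if_pos rfl, ZMod.card]
          have hone : ((χ b' : ℂˣ) : ℂ) * (starRingEnd ℂ) ((χ b' : ℂˣ) : ℂ) = 1 := by
            rw [Complex.mul_conj']
            norm_cast
            rw [norm_chi_eq_one χ b']
            norm_num
          rw [hone, one_mul]
        · have hne : ((b : ZMod d) - (b' : ZMod d)) ≠ 0 :=
            sub_ne_zero.mpr (fun hh => h (Units.ext hh.symm))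
          rw [if_neg hne, if_neg h]
          simp
      simp_rw [h3]
      simp
    simp_rw [h2]
    simp [mul_comm]
  have cast_eq : ((∑ c : ZMod d, ‖Sgauss d χ c‖ ^ 2 : ℝ) : ℂ)
      = ∑ c : ZMod d, Sgauss d χ c * (starRingEnd ℂ) (Sgauss d χ c) := by
    push_cast
    refine Finset.sum_congr rfl fun c _ => ?_
    rw [Complex.mul_conj']
  have := cast_eq.trans key
  exact_mod_cast this

lemma Sgauss_unit_mul {d : ℕ} [NeZero d] (χ : (ZMod d)ˣ →* ℂˣ) (u : (ZMod d)ˣ) (c : ZMod d) :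
    Sgauss d χ ((u : ZMod d) * c) = ((χ u⁻¹ : ℂˣ) : ℂ) * Sgauss d χ c := by
  rw [Sgauss, Sgauss, Finset.mul_sum]
  refine (Fintype.sum_equiv (Equiv.mulLeft u⁻¹) _ _ fun x => ?_).symm
  simp only [Equiv.coe_mulLeft]
  have huu : (u : ZMod d) * ((u⁻¹ : (ZMod d)ˣ) : ZMod d) = 1 := by
    rw [← Units.val_mul, mul_inv_cancel, Units.val_one]
  have harg : (u : ZMod d) * c * ((u⁻¹ * x : (ZMod d)ˣ) : ZMod d) = c * (x : ZMod d) := by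
    rw [Units.val_mul]
    calc (u : ZMod d) * c * (((u⁻¹ : (ZMod d)ˣ) : ZMod d) * (x : ZMod d))
        = ((u : ZMod d) * ((u⁻¹ : (ZMod d)ˣ) : ZMod d)) * (c * (x : ZMod d)) := by ring
      _ = c * (x : ZMod d) := by rw [huu, one_mul]
  have hchi : ((χ (u⁻¹ * x) : ℂˣ) : ℂ) = ((χ u⁻¹ : ℂˣ) : ℂ) * ((χ x : ℂˣ) : ℂ) := by
    rw [map_mul, Units.val_mul]
  rw [harg, hchi]
  ring

lemma norm_Sgauss_unit_mul {d : ℕ} [NeZero d] (χ : (ZMod d)ˣ →* ℂˣ) (u : (ZMod d)ˣ)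
    (c : ZMod d) : ‖Sgauss d χ ((u : ZMod d) * c)‖ = ‖Sgauss d χ c‖ := by
  rw [Sgauss_unit_mul, norm_mul, norm_chi_eq_one, one_mul]

/-- Gauss sum estimate: for a Dirichlet character `χ` modulo `d` (a homomorphism
`(ℤ/dℤ)ˣ → ℂˣ`) and a positive integer `a`,
`|Σ_{b∈(ℤ/dℤ)ˣ} χ(b) e^{2πiab/d}| ≤ √(ad)`. -/
theorem stmt4 (d : ℕ) [NeZero d] (χ : (ZMod d)ˣ →* ℂˣ) (a : ℕ) (ha : 0 < a) :
    ‖(∑ b : (ZMod d)ˣ,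
        (χ b : ℂ) * Complex.exp (2 * Real.pi * I * a * ((b : ZMod d).val : ℕ) / d))‖
      ≤ Real.sqrt (a * d) := by
  classical
  set α : ZMod d := (a : ZMod d) with hα
  have hsum : (∑ b : (ZMod d)ˣ,
      (χ b : ℂ) * Complex.exp (2 * Real.pi * I * a * ((b : ZMod d).val : ℕ) / d))
      = Sgauss d χ α := by
    rw [Sgauss]
    refine Finset.sum_congr rfl fun b _ => ?_
    congr 1
    have hz : ((a * (b : ZMod d).val : ℤ) : ZMod d) = α * (b : ZMod d) := by
      push_cast
      rw [ZMod.natCast_val, ZMod.cast_id]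
    rw [← hz, ZMod.stdAddChar_coe]
    congr 1
    push_cast
    ring
  rw [hsum]
  have hd : 0 < d := Nat.pos_of_ne_zero (NeZero.ne d)
  set T : Finset (ZMod d) := Finset.univ.image (fun u : (ZMod d)ˣ => (u : ZMod d) * α) with hT
  set Stab : Finset (ZMod d)ˣ :=
    Finset.univ.filter (fun u : (ZMod d)ˣ => (u : ZMod d) * α = α) with hStab
  -- the stabilizer has at most `a` elements
  have stab_card : Stab.card ≤ a := by
    have hinj := Finset.card_le_card_of_injOn
      (f := fun u : (ZMod d)ˣ => a * ((u : ZMod d) - 1).val / d)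
      (s := Stab) (t := Finset.range a) ?_ ?_
    · simpa using hinj
    · intro u hu
      rw [Finset.mem_coe, hStab, Finset.mem_filter] at hu
      have hy : α * ((u : ZMod d) - 1) = 0 := by
        rw [mul_sub, mul_one, mul_comm α, hu.2, sub_self]
      have hdvd : d ∣ a * ((u : ZMod d) - 1).val := by
        rw [← ZMod.natCast_eq_zero_iff]
        push_cast
        rw [ZMod.natCast_val, ZMod.cast_id]
        exact hy
      rw [Finset.mem_coe, Finset.mem_range]
      refine (Nat.div_lt_iff_lt_mul hd).mpr ?_
      have hv : ((u : ZMod d) - 1).val < d := ZMod.val_lt _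
      exact mul_lt_mul_of_pos_left hv ha
    · intro u hu u' hu' heq
      rw [Finset.mem_coe] at hu hu'
      have hdvd : d ∣ a * ((u : ZMod d) - 1).val := by
        rw [hStab, Finset.mem_filter] at hu
        have hy : α * ((u : ZMod d) - 1) = 0 := by
          rw [mul_sub, mul_one, mul_comm α, hu.2, sub_self]
        rw [← ZMod.natCast_eq_zero_iff]
        push_cast
        rw [ZMod.natCast_val, ZMod.cast_id]
        exact hy
      have hdvd' : d ∣ a * ((u' : ZMod d) - 1).val := by
        rw [hStab, Finset.mem_filter] at hu'
        have hy : α * ((u' : ZMod d) - 1) = 0 := by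
          rw [mul_sub, mul_one, mul_comm α, hu'.2, sub_self]
        rw [← ZMod.natCast_eq_zero_iff]
        push_cast
        rw [ZMod.natCast_val, ZMod.cast_id]
        exact hy
      have h1 : a * ((u : ZMod d) - 1).val = a * ((u' : ZMod d) - 1).val := by
        simp only at heq
        rw [← Nat.div_mul_cancel hdvd, ← Nat.div_mul_cancel hdvd', heq]
      have h2 : ((u : ZMod d) - 1).val = ((u' : ZMod d) - 1).val :=
        Nat.eq_of_mul_eq_mul_left ha h1
      have h3 : (u : ZMod d) - 1 = (u' : ZMod d) - 1 := ZMod.val_injective d h2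
      have h4 : (u : ZMod d) = (u' : ZMod d) := by
        have := congrArg (· + 1) h3
        simpa using this
      exact Units.ext h4
  -- each fiber of `u ↦ u * α` has at most `a` elements
  have fiber_le : ∀ c ∈ T,
      (Finset.univ.filter fun u : (ZMod d)ˣ => (u : ZMod d) * α = c).card ≤ a := by
    intro c hc
    obtain ⟨u₀, _, hu₀⟩ := Finset.mem_image.mp hc
    refine le_trans (le_trans (Finset.card_le_card_of_injOn
      (f := fun u : (ZMod d)ˣ => u * u₀⁻¹) ?_ ?_) le_rfl) stab_card
    · intro u hu
      rw [Finset.mem_coe, Finset.mem_filter] at hu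
      rw [Finset.mem_coe, hStab, Finset.mem_filter]
      refine ⟨Finset.mem_univ _, ?_⟩
      have huu : ((u₀⁻¹ : (ZMod d)ˣ) : ZMod d) * (u₀ : ZMod d) = 1 := by
        rw [← Units.val_mul, inv_mul_cancel, Units.val_one]
      calc ((u * u₀⁻¹ : (ZMod d)ˣ) : ZMod d) * α
          = ((u₀⁻¹ : (ZMod d)ˣ) : ZMod d) * ((u : ZMod d) * α) := by
            rw [Units.val_mul]; ring
        _ = ((u₀⁻¹ : (ZMod d)ˣ) : ZMod d) * ((u₀ : ZMod d) * α) := by rw [hu.2, hu₀]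
        _ = (((u₀⁻¹ : (ZMod d)ˣ) : ZMod d) * (u₀ : ZMod d)) * α := by ring
        _ = α := by rw [huu, one_mul]
    · intro x _ y _ hxy
      exact mul_right_cancel hxy
  -- count: card of units ≤ T.card * a
  have card_units_le : Fintype.card (ZMod d)ˣ ≤ T.card * a := by
    have hmem : ∀ u : (ZMod d)ˣ, u ∈ Finset.univ → (u : ZMod d) * α ∈ T :=
      fun u _ => Finset.mem_image_of_mem _ (Finset.mem_univ u)
    calc Fintype.card (ZMod d)ˣ
        = ∑ c ∈ T, (Finset.univ.filter fun u : (ZMod d)ˣ => (u : ZMod d) * α = c).card := by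
          rw [← Finset.card_univ]
          exact Finset.card_eq_sum_card_fiberwise hmem
      _ ≤ ∑ _c ∈ T, a := Finset.sum_le_sum fiber_le
      _ = T.card * a := by rw [Finset.sum_const, smul_eq_mul]
  -- norms are constant on T
  have norm_const : ∀ c ∈ T, ‖Sgauss d χ c‖ ^ 2 = ‖Sgauss d χ α‖ ^ 2 := by
    intro c hc
    obtain ⟨u, _, hu⟩ := Finset.mem_image.mp hc
    rw [← hu, norm_Sgauss_unit_mul]
  have sum_T : ∑ c ∈ T, ‖Sgauss d χ c‖ ^ 2 = T.card * ‖Sgauss d χ α‖ ^ 2 := by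
    rw [Finset.sum_congr rfl norm_const, Finset.sum_const, nsmul_eq_mul]
  have sum_T_le : ∑ c ∈ T, ‖Sgauss d χ c‖ ^ 2 ≤ (d : ℝ) * Fintype.card (ZMod d)ˣ := by
    rw [← parseval_gauss χ]
    exact Finset.sum_le_sum_of_subset_of_nonneg (Finset.subset_univ T)
      (fun c _ _ => sq_nonneg _)
  -- put everything together
  have cu_pos : (0 : ℝ) < Fintype.card (ZMod d)ˣ := by
    exact_mod_cast Fintype.card_pos
  have key : ‖Sgauss d χ α‖ ^ 2 ≤ (a : ℝ) * d := by
    have h1 : (Fintype.card (ZMod d)ˣ : ℝ) * ‖Sgauss d χ α‖ ^ 2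
        ≤ (T.card : ℝ) * a * ‖Sgauss d χ α‖ ^ 2 := by
      have : (Fintype.card (ZMod d)ˣ : ℝ) ≤ (T.card : ℝ) * a := by
        exact_mod_cast card_units_le
      exact mul_le_mul_of_nonneg_right this (sq_nonneg _)
    have h2 : (T.card : ℝ) * ‖Sgauss d χ α‖ ^ 2 ≤ (d : ℝ) * Fintype.card (ZMod d)ˣ := by
      rw [← sum_T]; exact sum_T_le
    nlinarith [sq_nonneg ‖Sgauss d χ α‖, cu_pos]
  refine Real.le_sqrt_of_sq_le ?_
  exact key
end

section
/- Let f ∈ ℂ[x] be a polynomial of degree n > 0 and let e be the largest positive integer such that f = f₀^e for some polynomial f₀ ∈ ℂ[x]. If d is a positive integer relatively prime to e, then the polynomial Y^d − f(x) is irreducible over the rational function field ℂ(x). -/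
open Polynomial

open IntermediateField in
/-- Kummer irreducibility criterion over a field containing a square root of `-1`:
the `-4·b⁴` exceptional case of Vahlen–Capelli cannot occur. -/
theorem aux_X_pow_sub_C_irreducible_of_sqrt_neg_one
    {K : Type*} [Field K] (hK : ∃ i : K, i ^ 2 = -1)
    {n : ℕ} (hn : n ≠ 0) {a : K}
    (ha : ∀ p : ℕ, p.Prime → p ∣ n → ∀ b : K, b ^ p ≠ a) :
    Irreducible (X ^ n - C a) := by
  induction n using induction_on_primes generalizing K a with
  | zero => exact absurd rfl hn
  | one => simpa using irreducible_X_sub_C a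
  | prime_mul p n hp IH =>
    rw [mul_comm]
    apply X_pow_mul_sub_C_irreducible
      (X_pow_sub_C_irreducible_of_prime hp (ha p hp (dvd_mul_right _ _)))
    intro E _ _ x hx
    have hne : n ≠ 0 := by
      rintro rfl; simp at hn
    have hint : IsIntegral K x := not_not.mp fun h ↦ by
      simpa only [degree_zero, degree_X_pow_sub_C hp.pos,
        WithBot.natCast_ne_bot] using congr_arg degree (hx.symm.trans (dif_neg h))
    obtain ⟨i, hi⟩ := hK
    apply IH ⟨algebraMap K K⟮x⟯ i, by rw [← map_pow, hi, map_neg, map_one]⟩ hne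
    intro q hq hqn b hb
    -- compute the norm of the generator
    have key : (Algebra.norm K b) ^ q = (-1 : K) ^ p * (-a) := by
      rw [← map_pow, hb, ← adjoin.powerBasis_gen hint,
        Algebra.PowerBasis.norm_gen_eq_coeff_zero_minpoly]
      rw [adjoin.powerBasis_gen hint, adjoin.powerBasis_dim hint]
      rw [minpoly_gen, hx]
      rw [natDegree_X_pow_sub_C]
      congr 1
      simp [coeff_X_pow, hp.ne_zero.symm]
    set c := Algebra.norm K b with hc
    rcases hp.eq_two_or_odd' with hp2 | hpodd
    · -- p = 2 : the norm is -a
      have key2 : c ^ q = -a := by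
        rw [key, hp2]; ring
      rcases hq.eq_two_or_odd' with hq2 | hqodd
      · -- q = 2 : use i to flip the sign
        refine ha 2 Nat.prime_two (by rw [hp2]; exact Dvd.dvd.mul_left (hq2 ▸ hqn) 2)
          (i * c) ?_
        rw [mul_pow, hi, ← hq2, key2]; ring
      · refine ha q hq (hqn.mul_left p) (-c) ?_
        rw [hqodd.neg_pow, key2, neg_neg]
    · refine ha q hq (hqn.mul_left p) c ?_
      rw [key, hpodd.neg_one_pow]; ring

/-- If an element of `RatFunc ℂ` has a power equal to the image of a polynomial, it
comes from a polynomial. -/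
theorem aux_exists_poly {g : RatFunc ℂ} {f : Polynomial ℂ} {k : ℕ} (hk : k ≠ 0)
    (h : g ^ k = algebraMap (Polynomial ℂ) (RatFunc ℂ) f) :
    ∃ q : Polynomial ℂ, algebraMap (Polynomial ℂ) (RatFunc ℂ) q = g := by
  rw [← IsIntegrallyClosed.isIntegral_iff]
  exact ⟨X ^ k - C f, monic_X_pow_sub_C f hk, by
    simp [Polynomial.eval₂_sub, h, sub_self]⟩

/-- Let `f ∈ ℂ[x]` be a polynomial of positive degree and let `e` be the largest
positive integer such that `f = f₀^e` for some polynomial `f₀`.  If `d` is a positive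
integer relatively prime to `e`, then `Y^d − f` is irreducible over `ℂ(x)`. -/
theorem stmt9 (f : Polynomial ℂ) (hf : 0 < f.natDegree)
    (e : ℕ) (he : 0 < e) (hpow : ∃ f₀ : Polynomial ℂ, f = f₀ ^ e)
    (hmax : ∀ k : ℕ, 0 < k → (∃ h : Polynomial ℂ, f = h ^ k) → k ≤ e)
    (d : ℕ) (hd : 0 < d) (hcop : Nat.Coprime d e) :
    Irreducible (X ^ d - C (algebraMap (Polynomial ℂ) (RatFunc ℂ) f)) := by
  obtain ⟨f₀, hf₀⟩ := hpow
  have hfne : f ≠ 0 := fun h => by simp [h] at hf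
  set φ := algebraMap (Polynomial ℂ) (RatFunc ℂ) with hφ
  have hinj : Function.Injective φ := IsFractionRing.injective _ _
  have hA : φ f ≠ 0 := fun h => hfne (hinj (by simpa using h))
  apply aux_X_pow_sub_C_irreducible_of_sqrt_neg_one
    ⟨algebraMap ℂ (RatFunc ℂ) Complex.I, by
      rw [← map_pow, Complex.I_sq, map_neg, map_one]⟩ hd.ne'
  intro p hp hpd b hb
  -- b comes from a polynomial h with f = h ^ p
  obtain ⟨h, hh⟩ := aux_exists_poly hp.ne_zero hb
  have hfh : f = h ^ p := hinj (by rw [map_pow, hh, hb])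
  -- coprimality of p and e
  have hpe : Nat.Coprime p e := Nat.Coprime.coprime_dvd_left hpd hcop
  obtain ⟨u, v, huv⟩ := Nat.isCoprime_iff_coprime.mpr hpe
  -- build a (p*e)-th root of f in RatFunc ℂ
  have hhne : φ h ≠ 0 := fun h0 => hA (by rw [← hb, ← hh, h0, zero_pow hp.ne_zero])
  have hf₀ne : φ f₀ ≠ 0 := by
    intro h0
    apply hA
    rw [hf₀, map_pow, h0, zero_pow he.ne']
  have hbp : (φ h) ^ (p : ℤ) = φ f := by
    rw [zpow_natCast, ← map_pow, ← hfh]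
  have hbe : (φ f₀) ^ (e : ℤ) = φ f := by
    rw [zpow_natCast, ← map_pow, ← hf₀]
  set g : RatFunc ℂ := (φ h) ^ v * (φ f₀) ^ u with hg
  have hgpe : g ^ (p * e) = φ f := by
    have : g ^ (p * e) = (φ h) ^ (v * (p * e : ℕ)) * (φ f₀) ^ (u * (p * e : ℕ)) := by
      rw [hg, mul_pow, ← zpow_natCast ((φ h) ^ v), ← zpow_natCast ((φ f₀) ^ u),
        ← zpow_mul, ← zpow_mul]
    have t1 : (φ h) ^ (v * ((p * e : ℕ) : ℤ)) = φ f ^ (v * e) := by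
      rw [show (v * ((p * e : ℕ) : ℤ)) = (p : ℤ) * (v * e) by push_cast; ring, zpow_mul, hbp]
    have t2 : (φ f₀) ^ (u * ((p * e : ℕ) : ℤ)) = φ f ^ (u * p) := by
      rw [show (u * ((p * e : ℕ) : ℤ)) = (e : ℤ) * (u * p) by push_cast; ring, zpow_mul, hbe]
    rw [this, t1, t2, ← zpow_add₀ hA,
      show (v * e + u * p : ℤ) = 1 by linarith [huv], zpow_one]
  -- get a polynomial (p*e)-th root of f
  obtain ⟨q, hq⟩ := aux_exists_poly (Nat.mul_ne_zero hp.ne_zero he.ne') hgpe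
  have hfq : f = q ^ (p * e) := hinj (by rw [map_pow, hq, hgpe])
  have hle : p * e ≤ e := hmax (p * e) (Nat.mul_pos hp.pos he) ⟨q, hfq⟩
  have h2 : 2 * e ≤ p * e := Nat.mul_le_mul_right e hp.two_le
  omega
end

section
/- The set {1, 5, 7, 11} is a subgroup of index 2 in (ℤ/24ℤ)ˣ, and every element of its nontrivial coset {13, 17, 19, 23} has least positive residue at least 12 = 24/2. Consequently, the constant d₀ in the equidistribution proposition for n = 2 and g = 1 cannot be taken smaller than 24. -/
def H24 : Subgroup (ZMod 24)ˣ where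
  carrier := {x | (x : ZMod 24).val = 1 ∨ (x : ZMod 24).val = 5 ∨
      (x : ZMod 24).val = 7 ∨ (x : ZMod 24).val = 11}
  mul_mem' := by decide
  one_mem' := by decide
  inv_mem' := by decide

instance H24.decMem : DecidablePred (· ∈ H24) := fun _ =>
  inferInstanceAs (Decidable (_ ∨ _ ∨ _ ∨ _))

lemma H24_card : Nat.card H24 = 4 := by
  rw [Nat.card_eq_fintype_card]
  decide

lemma H24_index : H24.index = 2 := by
  have h := Subgroup.index_mul_card H24
  rw [H24_card] at h
  have hG : Nat.card (ZMod 24)ˣ = 8 := by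
    rw [Nat.card_eq_fintype_card]; decide
  rw [hG] at h
  omega

/-- `{1, 5, 7, 11}` is a subgroup of index `2` in `(ℤ/24ℤ)ˣ`, every element of its
nontrivial coset has least positive residue at least `12 = 24/2`, and consequently
the equidistribution property (for `n = 2`, `g = 1`) fails at `d = 24`: the constant
`d₀` in the equidistribution proposition cannot be taken smaller than `24`. -/
theorem stmt11 :
    (∃ H : Subgroup (ZMod 24)ˣ,
      (∀ x : (ZMod 24)ˣ, x ∈ H ↔
        ((x : ZMod 24).val = 1 ∨ (x : ZMod 24).val = 5 ∨
          (x : ZMod 24).val = 7 ∨ (x : ZMod 24).val = 11)) ∧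
      H.index = 2 ∧
      (∀ x : (ZMod 24)ˣ, x ∉ H → 12 ≤ (x : ZMod 24).val)) ∧
    ¬ (∀ H : Subgroup (ZMod 24)ˣ, H.index ≤ 2 * 1 →
        ∀ x : (ZMod 24)ˣ, ∃ h ∈ H,
          0 < ((x * h : (ZMod 24)ˣ) : ZMod 24).val ∧
            ((((x * h : (ZMod 24)ˣ) : ZMod 24).val : ℝ) < (24 : ℝ) / 2)) := by
  constructor
  · exact ⟨H24, fun x => Iff.rfl, H24_index, by decide⟩
  · intro hall
    obtain ⟨h, hmem, _, hlt⟩ := hall H24 (by norm_num [H24_index])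
      (ZMod.unitOfCoprime 13 (by decide))
    set x : (ZMod 24)ˣ := ZMod.unitOfCoprime 13 (by decide)
    have hx13 : x ∉ H24 := by decide
    have hnot : x * h ∉ H24 := fun hc =>
      hx13 (by simpa using H24.mul_mem hc (H24.inv_mem hmem))
    have h12 : (12 : ℕ) ≤ ((x * h : (ZMod 24)ˣ) : ZMod 24).val :=
      (by decide : ∀ y : (ZMod 24)ˣ, y ∉ H24 → 12 ≤ (y : ZMod 24).val) _ hnot
    have hlt' : (((x * h : (ZMod 24)ˣ) : ZMod 24).val : ℝ) < 12 := by linarith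
    exact absurd (Nat.cast_lt (α := ℝ) |>.mp (by exact_mod_cast hlt')) (by omega)
end
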